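/- For every n : ℕ, every real number d, and every 0 ≤ l ≤ n: Σ_{k=0}^{n} Q l k = 2^n, i.e. every row of the matrix Q sums to 2^n. -/

import Mathlib

open Matrix Finset
open scoped BigOperators Kronecker ComplexOrder

noncomputable section

/-- The flip (swap) operator on `ℂ^d ⊗ ℂ^d`. -/
def Flip (d : ℕ) : Matrix (Fin d × Fin d) (Fin d × Fin d) ℂ :=
  Matrix.of fun p q => if p.1 = q.2 ∧ p.2 = q.1 then 1 else 0

/-- Projection onto the symmetric subspace, `Π_s = (1 + F)/2`. -/
def projSym (d : ℕ) : Matrix (Fin d × Fin d) (Fin d × Fin d) ℂ :=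
  (2 : ℂ)⁻¹ • (1 + Flip d)

/-- Projection onto the antisymmetric subspace, `Π_a = (1 - F)/2`. -/
def projAsym (d : ℕ) : Matrix (Fin d × Fin d) (Fin d × Fin d) ℂ :=
  (2 : ℂ)⁻¹ • (1 - Flip d)

/-- The symmetric Werner state `σ_d = (2/(d(d+1))) • Π_s`. -/
def wernerSym (d : ℕ) : Matrix (Fin d × Fin d) (Fin d × Fin d) ℂ :=
  (2 / ((d : ℂ) * ((d : ℂ) + 1))) • projSym d

/-- The antisymmetric Werner state `α_d = (2/(d(d-1))) • Π_a`. -/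
def wernerAsym (d : ℕ) : Matrix (Fin d × Fin d) (Fin d × Fin d) ℂ :=
  (2 / ((d : ℂ) * ((d : ℂ) - 1))) • projAsym d

/-- The POVM element `G_d`: diagonal, with `(i,j),(i,j)` entry `1` iff `i ≠ j`. -/
def Gmat (d : ℕ) : Matrix (Fin d × Fin d) (Fin d × Fin d) ℂ :=
  Matrix.diagonal fun p => if p.1 ≠ p.2 then 1 else 0

/-- `n`-fold tensor power of a matrix on `ℂ^d ⊗ ℂ^d`. -/
def tpow {d : ℕ} (n : ℕ) (X : Matrix (Fin d × Fin d) (Fin d × Fin d) ℂ) :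
    Matrix (Fin n → Fin d × Fin d) (Fin n → Fin d × Fin d) ℂ :=
  Matrix.of fun f g => ∏ m, X (f m) (g m)

/-- The twirled single-copy POVM element `M_d = ((d-1)/(d+1)) • Π_s + Π_a`. -/
def MdMat (d : ℕ) : Matrix (Fin d × Fin d) (Fin d × Fin d) ℂ :=
  (((d : ℂ) - 1) / ((d : ℂ) + 1)) • projSym d + projAsym d

/-- `A_k`: sum over all `k`-element subsets `S` of the copies of the tensor product with
`Π_a` on copies in `S` and `Π_s` elsewhere. -/
def Amat (d n k : ℕ) : Matrix (Fin n → Fin d × Fin d) (Fin n → Fin d × Fin d) ℂ :=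
  ∑ S ∈ Finset.powersetCard k (Finset.univ : Finset (Fin n)),
    Matrix.of fun f g => ∏ m, (if m ∈ S then projAsym d else projSym d) (f m) (g m)

/-- Partial transpose on `ℂ^d ⊗ ℂ^d`. -/
def pt {d : ℕ} (X : Matrix (Fin d × Fin d) (Fin d × Fin d) ℂ) :
    Matrix (Fin d × Fin d) (Fin d × Fin d) ℂ :=
  Matrix.of fun p q => X (p.1, q.2) (q.1, p.2)

/-- The maximally entangled state `Φ_d`. -/
def Phi (d : ℕ) : Matrix (Fin d × Fin d) (Fin d × Fin d) ℂ :=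
  Matrix.of fun p q => if p.1 = p.2 ∧ q.1 = q.2 then ((d : ℂ))⁻¹ else 0

/-- `n`-copy partial transpose. -/
def ptN {d n : ℕ} (Y : Matrix (Fin n → Fin d × Fin d) (Fin n → Fin d × Fin d) ℂ) :
    Matrix (Fin n → Fin d × Fin d) (Fin n → Fin d × Fin d) ℂ :=
  Matrix.of fun f g => Y (fun m => ((f m).1, (g m).2)) (fun m => ((g m).1, (f m).2))

/-- `T_l`: sum over all `l`-element subsets `S` of the copies of the tensor product with
`Φ_d` on copies in `S` and `1 - Φ_d` elsewhere. -/
def Tmat (d n l : ℕ) : Matrix (Fin n → Fin d × Fin d) (Fin n → Fin d × Fin d) ℂ :=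
  ∑ S ∈ Finset.powersetCard l (Finset.univ : Finset (Fin n)),
    Matrix.of fun f g => ∏ m, (if m ∈ S then Phi d else (1 - Phi d)) (f m) (g m)

/-- The matrix `Q` of the linear program: `Q l k = Σ_{j=0}^{min(l,k)}
(n−l choose k−j)(l choose j)(1−d)^j (1+d)^{l−j}`. -/
def Qmat (n : ℕ) (d : ℝ) (l k : ℕ) : ℝ :=
  ∑ j ∈ Finset.range (min l k + 1),
    ((n - l).choose (k - j) : ℝ) * (l.choose j : ℝ) * (1 - d) ^ j * (1 + d) ^ (l - j)

/-- A PPT POVM element on the `n`-copy space: `E`, `1 - E`, `E^Γ`, `(1-E)^Γ` all PSD. -/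
def IsPPTPovmElem {d n : ℕ}
    (E : Matrix (Fin n → Fin d × Fin d) (Fin n → Fin d × Fin d) ℂ) : Prop :=
  E.PosSemidef ∧ (1 - E).PosSemidef ∧ (ptN E).PosSemidef ∧ (ptN (1 - E)).PosSemidef

/-- Error probability for discriminating `σ_d^{⊗n}` (prior `p`) from `α_d^{⊗n}`
(prior `1-p`) with the two-outcome POVM `{E, 1 - E}`. -/
def errProb (d n : ℕ) (p : ℝ)
    (E : Matrix (Fin n → Fin d × Fin d) (Fin n → Fin d × Fin d) ℂ) : ℝ :=
  ((p : ℂ) * (E * tpow n (wernerSym d)).trace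
    + (1 - (p : ℂ)) * ((1 - E) * tpow n (wernerAsym d)).trace).re

/-- Separability of a bipartite matrix. -/
def IsSep {I J : Type*} [Fintype I] [Fintype J]
    (W : Matrix (I × J) (I × J) ℂ) : Prop :=
  ∃ (m : ℕ) (A : Fin m → Matrix I I ℂ) (B : Fin m → Matrix J J ℂ),
    (∀ i, (A i).PosSemidef) ∧ (∀ i, (B i).PosSemidef) ∧ W = ∑ i, A i ⊗ₖ B i

/-- The positive semidefinite square root (Mathlib's former `Matrix.PosSemidef.sqrt`). -/
def Matrix.PosSemidef.sqrt {n 𝕜 : Type*} [Fintype n] [DecidableEq n] [RCLike 𝕜]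
    {A : Matrix n n 𝕜} (hA : A.PosSemidef) : Matrix n n 𝕜 :=
  (hA.1.eigenvectorUnitary : Matrix n n 𝕜) *
    diagonal (((↑) : ℝ → 𝕜) ∘ Real.sqrt ∘ hA.1.eigenvalues) *
    (star hA.1.eigenvectorUnitary : Matrix n n 𝕜)

/-- Trace norm `‖X‖₁ = Tr √(Xᴴ X)`. -/
def traceNorm {ι : Type*} [Fintype ι] [DecidableEq ι] (X : Matrix ι ι ℂ) : ℝ :=
  (Matrix.PosSemidef.sqrt (Matrix.posSemidef_conjTranspose_mul_self X)).trace.re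

/-- Frobenius (Hilbert–Schmidt) norm `‖X‖₂ = √(Tr (Xᴴ X))`. -/
def frobNorm {ι : Type*} [Fintype ι] (X : Matrix ι ι ℂ) : ℝ :=
  Real.sqrt ((Xᴴ * X).trace.re)
lemma aux_choose_sum (q m : ℕ) (h : q ≤ m) :
    ∑ i ∈ Finset.range (m + 1), ((q.choose i : ℝ)) = 2 ^ q := by
  rw [← Finset.sum_subset (Finset.range_subset_range.2 (by omega) :
      Finset.range (q + 1) ⊆ Finset.range (m + 1))]
  · rw [← Nat.cast_sum, Nat.sum_range_choose]; push_cast; ring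
  · intro i hi hni
    simp only [Finset.mem_range] at hi hni
    rw [Nat.choose_eq_zero_of_lt (by omega)]
    simp

/-- every row of `Q` sums to `2^n`. -/
theorem Qmat_row_sum (n : ℕ) (d : ℝ) (l : ℕ) (hl : l ≤ n) :
    ∑ k ∈ Finset.range (n + 1), Qmat n d l k = 2 ^ n := by
  have step1 : ∀ k, Qmat n d l k =
      ∑ j ∈ Finset.range (l + 1),
        (if j ≤ k then ((n - l).choose (k - j) : ℝ) else 0) *
          (l.choose j : ℝ) * (1 - d) ^ j * (1 + d) ^ (l - j) := by
    intro k
    unfold Qmat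
    rw [← Finset.sum_subset (Finset.range_subset_range.2 (by omega) :
        Finset.range (min l k + 1) ⊆ Finset.range (l + 1))]
    · refine Finset.sum_congr rfl fun j hj => ?_
      simp only [Finset.mem_range] at hj
      rw [if_pos (by omega)]
    · intro j hj hnj
      simp only [Finset.mem_range] at hj hnj
      rw [if_neg (by omega)]
      ring
  calc ∑ k ∈ Finset.range (n + 1), Qmat n d l k
      = ∑ k ∈ Finset.range (n + 1), ∑ j ∈ Finset.range (l + 1),
          (if j ≤ k then ((n - l).choose (k - j) : ℝ) else 0) *
            (l.choose j : ℝ) * (1 - d) ^ j * (1 + d) ^ (l - j) :=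
        Finset.sum_congr rfl fun k _ => step1 k
    _ = ∑ j ∈ Finset.range (l + 1), ∑ k ∈ Finset.range (n + 1),
          (if j ≤ k then ((n - l).choose (k - j) : ℝ) else 0) *
            (l.choose j : ℝ) * (1 - d) ^ j * (1 + d) ^ (l - j) := Finset.sum_comm
    _ = ∑ j ∈ Finset.range (l + 1),
          (2 : ℝ) ^ (n - l) * ((l.choose j : ℝ) * (1 - d) ^ j * (1 + d) ^ (l - j)) := by
        refine Finset.sum_congr rfl fun j hj => ?_
        simp only [Finset.mem_range] at hj
        have hjn : j ≤ n := by omega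
        rw [← Finset.sum_mul, ← Finset.sum_mul, ← Finset.sum_mul]
        have hinner : ∑ k ∈ Finset.range (n + 1),
            (if j ≤ k then ((n - l).choose (k - j) : ℝ) else 0) = 2 ^ (n - l) := by
          rw [Finset.range_eq_Ico]
          rw [← Finset.sum_subset (Finset.Ico_subset_Ico (by omega) le_rfl :
              Finset.Ico j (n + 1) ⊆ Finset.Ico 0 (n + 1))]
          · rw [Finset.sum_Ico_eq_sum_range]
            have : ∀ i ∈ Finset.range (n + 1 - j),
                (if j ≤ j + i then ((n - l).choose (j + i - j) : ℝ) else 0)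
                  = ((n - l).choose i : ℝ) := by
              intro i _
              rw [if_pos (by omega), Nat.add_sub_cancel_left]
            rw [Finset.sum_congr rfl this]
            have hrange : n + 1 - j = (n - j) + 1 := by omega
            rw [hrange]
            exact aux_choose_sum _ _ (by omega)
          · intro k hk hnk
            simp only [Finset.mem_Ico] at hk hnk
            rw [if_neg (by omega)]
        rw [hinner]
        ring
    _ = (2 : ℝ) ^ (n - l) * ∑ j ∈ Finset.range (l + 1),
          (l.choose j : ℝ) * (1 - d) ^ j * (1 + d) ^ (l - j) := by
        rw [Finset.mul_sum]
    _ = (2 : ℝ) ^ (n - l) * 2 ^ l := by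
        congr 1
        have := add_pow (1 - d) (1 + d) l
        have h2 : (1 - d) + (1 + d) = 2 := by ring
        rw [h2] at this
        rw [this]
        refine Finset.sum_congr rfl fun j _ => ?_
        ring
    _ = 2 ^ n := by
        rw [← pow_add]
        congr 1
        omega

end
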